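/- Every deterministic Büchi automaton that accepts an ω-language belonging to F_σ ∩ G_δ (in the prefix-distance topology on Σ^ω) is inherently weak: no reachable strongly connected component of its transition graph contains both an accepting and a non-accepting cycle. -/

import Mathlib

/-- A deterministic Büchi automaton on infinite words. -/
structure DBA (A Q : Type*) where
  delta : Q → A → Q
  init : Q
  acc : Set Q

/-- The unique run of a deterministic automaton on an infinite word. -/
def DBA.run {A Q : Type*} (M : DBA A Q) (w : ℕ → A) : ℕ → Q
  | 0 => M.init
  | n + 1 => M.delta (M.run w n) (w n)

/-- The ω-language accepted by the deterministic Büchi automaton. -/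
def DBA.Lang {A Q : Type*} (M : DBA A Q) : Set (ℕ → A) :=
  {w | {n | M.run w n ∈ M.acc}.Infinite}

/-- The state reached from `q` after reading the finite word `u`. -/
def DBA.steps {A Q : Type*} (M : DBA A Q) (q : Q) (u : List A) : Q :=
  u.foldl M.delta q

/-- An accepting cycle at `q`: a nonempty cycle from `q` back to `q` one of
whose states belongs to the accepting set. -/
def DBA.AccCycle {A Q : Type*} (M : DBA A Q) (q : Q) : Prop :=
  ∃ u : List A, u ≠ [] ∧ M.steps q u = q ∧
    ∃ i, i < u.length ∧ M.steps q (u.take i) ∈ M.acc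

/-- A non-accepting cycle at `q`: a nonempty cycle from `q` back to `q` none
of whose states belongs to the accepting set. -/
def DBA.RejCycle {A Q : Type*} (M : DBA A Q) (q : Q) : Prop :=
  ∃ u : List A, u ≠ [] ∧ M.steps q u = q ∧
    ∀ i, i < u.length → M.steps q (u.take i) ∉ M.acc

/-- The automaton is inherently weak: no reachable strongly connected
component of its transition graph contains both an accepting and a
non-accepting cycle. -/
def DBA.InherentlyWeak {A Q : Type*} (M : DBA A Q) : Prop :=
  ¬ ∃ q₁ q₂ : Q,
      (∃ u, M.steps M.init u = q₁) ∧
      (∃ v, M.steps q₁ v = q₂) ∧ (∃ v, M.steps q₂ v = q₁) ∧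
      M.AccCycle q₁ ∧ M.RejCycle q₂

/-- Length of the longest common prefix of two distinct infinite words. -/
noncomputable def commonLen {A : Type*} (w w' : ℕ → A) : ℕ :=
  sInf {n | w n ≠ w' n}

/-- The prefix distance on infinite words. -/
noncomputable def wdist {A : Type*} (w w' : ℕ → A) : ℝ :=
  letI := Classical.propDecidable (w = w')
  if w = w' then 0 else 1 / (commonLen w w' + 1)

/-- Openness in the prefix-distance topology on `Σ^ω`. -/
def IsOpenW {A : Type*} (U : Set (ℕ → A)) : Prop :=
  ∀ w ∈ U, ∃ ε : ℝ, 0 < ε ∧ ∀ w', wdist w w' < ε → w' ∈ U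

/-- `F_σ` in the prefix-distance topology: countable union of closed sets. -/
def IsFsigmaW {A : Type*} (L : Set (ℕ → A)) : Prop :=
  ∃ C : ℕ → Set (ℕ → A), (∀ i, IsOpenW (C i)ᶜ) ∧ L = ⋃ i, C i

/-- `G_δ` in the prefix-distance topology: countable intersection of opens. -/
def IsGdeltaW {A : Type*} (L : Set (ℕ → A)) : Prop :=
  ∃ U : ℕ → Set (ℕ → A), (∀ i, IsOpenW (U i)) ∧ L = ⋂ i, U i


section Aux
variable {A Q : Type*} (M : DBA A Q)

lemma steps_append (q : Q) (u v : List A) :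
    M.steps q (u ++ v) = M.steps (M.steps q u) v := List.foldl_append

lemma steps_join_replicate (q : Q) (u : List A) (h : M.steps q u = q) :
    ∀ k, M.steps q (List.flatten (List.replicate k u)) = q
  | 0 => rfl
  | k + 1 => by
    rw [List.replicate_succ, List.flatten_cons, steps_append, h,
      steps_join_replicate q u h k]

/-- segment of an infinite word -/
def seg (w : ℕ → A) (m n : ℕ) : List A := (List.range n).map (fun i => w (m + i))

lemma seg_succ (w : ℕ → A) (m n : ℕ) :
    seg w m (n + 1) = seg w m n ++ [w (m + n)] := by
  simp [seg, List.range_succ]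

@[simp] lemma seg_length (w : ℕ → A) (m n : ℕ) : (seg w m n).length = n := by
  simp [seg]

lemma run_add (w : ℕ → A) (m : ℕ) :
    ∀ n, M.run w (m + n) = M.steps (M.run w m) (seg w m n)
  | 0 => rfl
  | n + 1 => by
    rw [show m + (n + 1) = (m + n) + 1 from rfl, seg_succ, steps_append]
    show M.delta (M.run w (m+n)) (w (m+n)) = _
    rw [run_add w m n]
    rfl

lemma run_eq_steps (w : ℕ → A) (n : ℕ) :
    M.run w n = M.steps M.init (seg w 0 n) := by
  have := run_add M w 0 n
  simpa [DBA.run] using this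

lemma seg_eq_take {w : ℕ → A} {m n : ℕ} {u : List A} (a : A)
    (hn : n ≤ u.length) (h : ∀ i < n, w (m + i) = u.getD i a) :
    seg w m n = u.take n := by
  apply List.ext_getElem
  · simp [hn]
  · intro i h1 h2
    simp only [seg, List.getElem_map, List.getElem_range, List.getElem_take]
    simp only [seg_length] at h1
    rw [h i h1, List.getD_eq_getElem u a (lt_of_lt_of_le h1 hn)]

end Aux

section Words
variable {A : Type*}

lemma length_flatten_replicate (k : ℕ) (u : List A) :
    (List.flatten (List.replicate k u)).length = k * u.length := by
  induction k with
  | zero => simp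
  | succ k ih => simp [List.replicate_succ, ih, Nat.succ_mul, Nat.add_comm]

lemma getD_flatten_replicate (a : A) (u : List A) (hu : u ≠ []) :
    ∀ (k m : ℕ), m < k * u.length →
      (List.flatten (List.replicate k u)).getD m a = u.getD (m % u.length) a := by
  intro k
  induction k with
  | zero => intro m hm; simp at hm
  | succ k ih =>
    intro m hm
    have hul : 0 < u.length := List.length_pos_iff.2 hu
    have hlen : (List.flatten (List.replicate (k+1) u)).length = (k+1) * u.length :=
      length_flatten_replicate _ _
    rw [List.replicate_succ, List.flatten_cons]
    by_cases h : m < u.length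
    · have h1 : m < (u ++ (List.replicate k u).flatten).length := by
        simp [length_flatten_replicate, Nat.succ_mul] at hlen ⊢; omega
      rw [List.getD_eq_getElem _ a h1, List.getElem_append_left h,
        Nat.mod_eq_of_lt h, List.getD_eq_getElem _ a h]
    · push_neg at h
      have hm' : m - u.length < k * u.length := by
        rw [Nat.succ_mul] at hm; omega
      have h1 : m < (u ++ (List.replicate k u).flatten).length := by
        simp [length_flatten_replicate, Nat.succ_mul]; omega
      have h2 : m - u.length < ((List.replicate k u).flatten).length := by
        simpa [length_flatten_replicate] using hm'
      rw [List.getD_eq_getElem _ a h1, List.getElem_append_right h,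
        ← List.getD_eq_getElem _ a h2, ih _ hm']
      congr 1
      conv_rhs => rw [Nat.mod_eq_sub_mod h]

/-- infinite word: finite prefix followed by infinite word -/
noncomputable def appendW (a : A) (p : List A) (u : ℕ → A) : ℕ → A :=
  fun n => if n < p.length then p.getD n a else u (n - p.length)

/-- periodic infinite word -/
noncomputable def cycW (a : A) (x : List A) : ℕ → A :=
  fun n => x.getD (n % x.length) a

lemma getD_prefix {p q : List A} (a : A) (h : p <+: q) {n : ℕ} (hn : n < p.length) :
    q.getD n a = p.getD n a := by
  obtain ⟨t, rfl⟩ := h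
  rw [List.getD_eq_getElem _ a hn, List.getD_eq_getElem _ a (by simp; omega),
    List.getElem_append_left hn]

/-- the word `p · x^ω` has prefix `p ++ x^k` -/
lemma appendW_cyc_prefix (a : A) (p x : List A) (hx : x ≠ []) (k : ℕ) :
    ∀ n < (p ++ List.flatten (List.replicate k x)).length,
      appendW a p (cycW a x) n = (p ++ List.flatten (List.replicate k x)).getD n a := by
  intro n hn
  have hx0 : 0 < x.length := List.length_pos_iff.2 hx
  simp only [List.length_append, length_flatten_replicate] at hn
  have hlen : (p ++ List.flatten (List.replicate k x)).length = p.length + k * x.length := by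
    simp [length_flatten_replicate]
  by_cases h : n < p.length
  · rw [appendW, if_pos h, getD_prefix a ⟨_, rfl⟩ h]
  · push_neg at h
    have h1 : n < (p ++ List.flatten (List.replicate k x)).length := by omega
    have h2 : n - p.length < (List.flatten (List.replicate k x)).length := by
      rw [length_flatten_replicate]; omega
    rw [appendW, if_neg (by omega), cycW,
      List.getD_eq_getElem (p ++ _) a h1, List.getElem_append_right h,
      ← List.getD_eq_getElem _ a h2,
      getD_flatten_replicate a x hx k _ (by omega)]
end Words

/-- key consequence of openness: a whole prefix-cylinder around any member -/
lemma isOpenW_prefix {A : Type*} {U : Set (ℕ → A)} (hU : IsOpenW U) {w : ℕ → A}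
    (hw : w ∈ U) : ∃ N : ℕ, ∀ w', (∀ n < N, w' n = w n) → w' ∈ U := by
  obtain ⟨ε, hε, h⟩ := hU w hw
  obtain ⟨N, hN⟩ := exists_nat_gt (1 / ε)
  refine ⟨N, fun w' hw' => h w' ?_⟩
  by_cases hew : w = w'
  · simpa [wdist, hew] using hε
  · rw [wdist, if_neg hew]
    have hne : {n | w n ≠ w' n}.Nonempty := by
      by_contra hc
      exact hew (funext fun n => by
        by_contra hn
        exact hc ⟨n, hn⟩)
    have hmem : w (commonLen w w') ≠ w' (commonLen w w') := Nat.sInf_mem hne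
    have hNle : N ≤ commonLen w w' := by
      by_contra hc
      push_neg at hc
      exact hmem (hw' _ hc).symm
    have h1 : (1:ℝ) / ε < (N:ℝ) + 1 := lt_of_lt_of_le hN (by linarith)
    have h2 : (1:ℝ) / ((N:ℝ) + 1) < ε := by
      rw [div_lt_iff₀ (by positivity)]
      rw [div_lt_iff₀ hε] at h1
      linarith
    calc (1:ℝ) / ((commonLen w w' : ℝ) + 1) ≤ 1 / ((N:ℝ) + 1) := by
          apply one_div_le_one_div_of_le (by positivity)
          exact_mod_cast by omega
      _ < ε := h2

section Facts
variable {A Q : Type*} (M : DBA A Q)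

lemma run_appendW (a : A) {p : List A} {u : ℕ → A} :
    M.run (appendW a p u) p.length = M.steps M.init p := by
  rw [run_eq_steps]
  have : seg (appendW a p u) 0 p.length = p.take p.length :=
    seg_eq_take a le_rfl (fun i hi => by simp [appendW, hi])
  rw [this, List.take_length]

/-- run on `p · x^ω` after the prefix: position `p.length + k*|x| + j`. -/
lemma run_appendW_cyc (a : A) {p x : List A} (hx : x ≠ []) :
    ∀ k, ∀ j ≤ x.length,
      M.run (appendW a p (cycW a x)) (p.length + k * x.length + j)
        = M.steps (M.steps M.init p) ((List.flatten (List.replicate k x)) ++ x.take j) := by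
  have hx0 : 0 < x.length := List.length_pos_iff.2 hx
  have hseg : ∀ k j, j ≤ x.length →
      seg (appendW a p (cycW a x)) (p.length + k * x.length) j = x.take j := by
    intro k j hj
    apply seg_eq_take a hj
    intro i hi
    have : p.length + k * x.length + i - p.length = k * x.length + i := by omega
    simp only [appendW, if_neg (by omega : ¬ p.length + k * x.length + i < p.length), this,
      cycW]
    congr 1
    rw [Nat.add_comm, Nat.add_mul_mod_self_right, Nat.mod_eq_of_lt (by omega)]
  intro k j hj
  rw [run_add, hseg k j hj, steps_append]
  congr 1
  induction k with
  | zero => simpa [DBA.steps] using run_appendW M a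
  | succ k ih =>
    have h1 : p.length + (k+1) * x.length = (p.length + k * x.length) + x.length := by ring
    rw [h1, run_add, hseg k x.length le_rfl, List.take_length, ih,
      List.replicate_succ', List.flatten_append, steps_append]
    simp

lemma accCycle_lang (a : A) {p x : List A} (hx : x ≠ []) (hcyc : M.steps (M.steps M.init p) x = M.steps M.init p)
    {i : ℕ} (hi : i < x.length) (hacc : M.steps (M.steps M.init p) (x.take i) ∈ M.acc) :
    appendW a p (cycW a x) ∈ M.Lang := by
  have hx0 : 0 < x.length := List.length_pos_iff.2 hx
  have key : ∀ k, M.run (appendW a p (cycW a x)) (p.length + k * x.length + i) ∈ M.acc := by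
    intro k
    rw [run_appendW_cyc M a hx k i (le_of_lt hi), steps_append,
      steps_join_replicate _ _ _ hcyc]
    exact hacc
  apply Set.infinite_of_injective_forall_mem
    (f := fun k : ℕ => p.length + k * x.length + i)
  · intro k1 k2 h
    simp only at h
    exact Nat.eq_of_mul_eq_mul_right hx0 (by omega)
  · exact key

lemma rejCycle_not_lang (a : A) {p y : List A} (hy : y ≠ [])
    (hcyc : M.steps (M.steps M.init p) y = M.steps M.init p)
    (hrej : ∀ i < y.length, M.steps (M.steps M.init p) (y.take i) ∉ M.acc) :
    appendW a p (cycW a y) ∉ M.Lang := by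
  have hy0 : 0 < y.length := List.length_pos_iff.2 hy
  intro hw
  have key : ∀ n, p.length ≤ n → M.run (appendW a p (cycW a y)) n ∉ M.acc := by
    intro n hn
    obtain ⟨k, j, hj, rfl⟩ : ∃ k j, j < y.length ∧ n = p.length + k * y.length + j :=
      ⟨(n - p.length) / y.length, (n - p.length) % y.length,
        Nat.mod_lt _ hy0, by rw [Nat.add_assoc, Nat.div_add_mod']; omega⟩
    rw [run_appendW_cyc M a hy k j (le_of_lt hj), steps_append,
      steps_join_replicate _ _ _ hcyc]
    exact hrej j hj
  have : {n | M.run (appendW a p (cycW a y)) n ∈ M.acc} ⊆ Set.Iio p.length := by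
    intro n hn
    by_contra hc
    exact key n (by simpa using hc) hn
  exact hw ((Set.finite_Iio _).subset this)

end Facts

/-- Every deterministic Büchi automaton accepting an ω-language in
`F_σ ∩ G_δ` (prefix-distance topology on `Σ^ω`) is inherently weak. -/
theorem fsigma_gdelta_inherentlyWeak {A Q : Type*} [Finite Q]
    (M : DBA A Q) (h1 : IsFsigmaW M.Lang) (h2 : IsGdeltaW M.Lang) :
    M.InherentlyWeak := by
  rintro ⟨q₁, q₂, ⟨u₀, hu₀⟩, ⟨v, hv⟩, ⟨v', hv'⟩,
    ⟨x, hxne, hxcyc, ia, hia, hiacc⟩, ⟨y, hyne, hycyc, hyrej⟩⟩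
  obtain ⟨C, hC, hCL⟩ := h1
  obtain ⟨U, hU, hUL⟩ := h2
  obtain ⟨a, -⟩ : ∃ a, a ∈ x := List.exists_mem_of_ne_nil x hxne
  have hx0 : 0 < x.length := List.length_pos_iff.2 hxne
  have hy0 : 0 < y.length := List.length_pos_iff.2 hyne
  -- the one-stage extension
  have key : ∀ (k : ℕ) (p : List A), M.steps M.init p = q₁ →
      ∃ p', M.steps M.init p' = q₁ ∧ p <+: p' ∧ p.length < p'.length ∧
        ∀ w' : ℕ → A, (∀ n < p'.length, w' n = p'.getD n a) →
          w' ∈ U k ∧ w' ∉ C k := by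
    intro k p hp
    -- accepting stage
    have hwA : appendW a p (cycW a x) ∈ M.Lang := by
      refine accCycle_lang M a hxne ?_ hia ?_ <;> rw [hp]
      · exact hxcyc
      · exact hiacc
    have hwAU : appendW a p (cycW a x) ∈ U k := by
      rw [hUL] at hwA
      exact Set.mem_iInter.1 hwA k
    obtain ⟨N₁, hN₁⟩ := isOpenW_prefix (hU k) hwAU
    set p₁ := p ++ (List.replicate N₁ x).flatten with hp₁def
    have hl₁ : p₁.length = p.length + N₁ * x.length := by
      simp [hp₁def, length_flatten_replicate]
    have hp₁ : M.steps M.init p₁ = q₁ := by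
      rw [hp₁def, steps_append, hp, steps_join_replicate _ _ _ hxcyc]
    have hN₁le : N₁ ≤ p₁.length := by
      have : N₁ * 1 ≤ N₁ * x.length := Nat.mul_le_mul_left _ hx0
      omega
    have hpref₁ : ∀ w' : ℕ → A, (∀ n < p₁.length, w' n = p₁.getD n a) → w' ∈ U k := by
      intro w' h
      refine hN₁ w' fun n hn => ?_
      rw [h n (lt_of_lt_of_le hn hN₁le),
        ← appendW_cyc_prefix a p x hxne N₁ n (lt_of_lt_of_le hn hN₁le)]
    -- rejecting stage
    set p₂ := p₁ ++ v with hp₂def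
    have hp₂ : M.steps M.init p₂ = q₂ := by
      rw [hp₂def, steps_append, hp₁, hv]
    have hwB : appendW a p₂ (cycW a y) ∉ M.Lang := by
      refine rejCycle_not_lang M a hyne ?_ ?_ <;> rw [hp₂]
      · exact hycyc
      · exact hyrej
    have hwBC : appendW a p₂ (cycW a y) ∉ C k := by
      intro hc
      exact hwB (hCL ▸ Set.mem_iUnion.2 ⟨k, hc⟩)
    obtain ⟨N₂, hN₂⟩ := isOpenW_prefix (hC k) hwBC
    set p₃ := p₂ ++ (List.replicate (N₂ + 1) y).flatten with hp₃def
    have hl₃ : p₃.length = p₂.length + (N₂ + 1) * y.length := by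
      simp [hp₃def, length_flatten_replicate]
    have hp₃ : M.steps M.init p₃ = q₂ := by
      rw [hp₃def, steps_append, hp₂, steps_join_replicate _ _ _ hycyc]
    have hN₂le : N₂ ≤ p₃.length := by
      have : (N₂ + 1) * 1 ≤ (N₂ + 1) * y.length := Nat.mul_le_mul_left _ hy0
      omega
    have hpref₃ : ∀ w' : ℕ → A, (∀ n < p₃.length, w' n = p₃.getD n a) → w' ∉ C k := by
      intro w' h
      refine hN₂ w' fun n hn => ?_
      rw [h n (lt_of_lt_of_le hn hN₂le),
        ← appendW_cyc_prefix a p₂ y hyne (N₂ + 1) n (lt_of_lt_of_le hn hN₂le)]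
    -- combine
    refine ⟨p₃ ++ v', ?_, ?_, ?_, ?_⟩
    · rw [steps_append, hp₃, hv']
    · have h1 : p <+: p₁ := List.prefix_append p _
      have h2 : p₁ <+: p₂ := List.prefix_append p₁ v
      have h3 : p₂ <+: p₃ := List.prefix_append p₂ _
      exact ((h1.trans h2).trans h3).trans (List.prefix_append p₃ v')
    · have h12 : p₁.length ≤ p₂.length := by simp [hp₂def]
      have h34 : p₃.length ≤ (p₃ ++ v').length := by simp
      have : (N₂ + 1) * 1 ≤ (N₂ + 1) * y.length := Nat.mul_le_mul_left _ hy0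
      omega
    · intro w' hw'
      have hpref : ∀ r : List A, r <+: p₃ ++ v' →
          (∀ n < r.length, w' n = r.getD n a) := by
        intro r hr n hn
        rw [hw' n (lt_of_lt_of_le hn hr.length_le), getD_prefix a hr hn]
      constructor
      · exact hpref₁ w' (hpref p₁ (((List.prefix_append p₁ v).trans
          (List.prefix_append p₂ _)).trans (List.prefix_append p₃ _)))
      · exact hpref₃ w' (hpref p₃ (List.prefix_append p₃ _))
  -- iterate with choice
  choose! f hf1 hf2 hf3 hf4 using key
  set P : ℕ → List A := fun k => Nat.rec u₀ (fun k p => f k p) k with hPdef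
  have hPsucc : ∀ k, P (k + 1) = f k (P k) := fun _ => rfl
  have hInv : ∀ k, M.steps M.init (P k) = q₁ := by
    intro k
    induction k with
    | zero => exact hu₀
    | succ k ih => rw [hPsucc]; exact hf1 k (P k) ih
  have hchain : ∀ i j, i ≤ j → P i <+: P j := by
    intro i j hij
    induction j, hij using Nat.le_induction with
    | base => exact List.prefix_refl _
    | succ j hij ih => exact ih.trans (hPsucc j ▸ hf2 j (P j) (hInv j))
  have hlen : ∀ k, k ≤ (P k).length := by
    intro k
    induction k with
    | zero => exact Nat.zero_le _
    | succ k ih =>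
      have := hf3 k (P k) (hInv k)
      rw [← hPsucc] at this
      omega
  set wfin : ℕ → A := fun n => (P (n + 1)).getD n a with hwdef
  have hPref : ∀ k, ∀ n < (P k).length, wfin n = (P k).getD n a := by
    intro k n hn
    rcases le_total k (n + 1) with h | h
    · exact getD_prefix a (hchain k (n + 1) h) hn
    · exact (getD_prefix a (hchain (n + 1) k h)
        (lt_of_lt_of_le (Nat.lt_succ_self n) (hlen (n + 1)))).symm
  have hmem : ∀ k, wfin ∈ U k ∧ wfin ∉ C k := by
    intro k
    have := hf4 k (P k) (hInv k) wfin
    rw [← hPsucc] at this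
    exact this (hPref (k + 1))
  have hin : wfin ∈ M.Lang := by
    rw [hUL]
    exact Set.mem_iInter.2 fun k => (hmem k).1
  rw [hCL] at hin
  obtain ⟨s, ⟨k, rfl⟩, hk⟩ := hin
  exact (hmem k).2 hk
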